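/- Let Λ ⊂ ℝ^d be any subset, let k ∈ ℕ, and let U be a set of k+1 pairwise non-parallel directions. If F, F' ⊆ Λ are finite subsets each of cardinality at most k and they have the same X-rays in all directions of U, then F = F'. Moreover, for every finite F ⊆ Λ of cardinality at most k, the grid G^F_U equals F. -/

import Mathlib

open scoped Classical

/-- The grid of a finite set `F` with respect to a set of directions `U`. -/
noncomputable def grid (d : ℕ) (U : Finset (EuclideanSpace ℝ (Fin d)))
    (F : Finset (EuclideanSpace ℝ (Fin d))) : Set (EuclideanSpace ℝ (Fin d)) :=
  ⋂ u ∈ U, ⋃ z ∈ F, {x | ∃ t : ℝ, x = z + t • u}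

lemma key_aux {d k : ℕ} {U S : Finset (EuclideanSpace ℝ (Fin d))}
    (hcard : U.card = k + 1)
    (hpar : ∀ u ∈ U, ∀ v ∈ U, u ≠ v → ¬∃ c : ℝ, u = c • v)
    (hS : S.card ≤ k) {x : EuclideanSpace ℝ (Fin d)} (hx : x ∉ S)
    (h : ∀ u ∈ U, ∃ y ∈ S, ∃ t : ℝ, y = x + t • u) : False := by
  have hle : U.card ≤ S.card := by
    apply Finset.card_le_card_of_injOn
      (fun u => if h' : ∃ y ∈ S, ∃ t : ℝ, y = x + t • u then h'.choose else x)
    · intro u hu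
      simp only
      rw [dif_pos (h u (Finset.mem_coe.mp hu))]
      exact (h u (Finset.mem_coe.mp hu)).choose_spec.1
    · intro u hu v hv huv
      by_contra hne
      simp only at huv
      rw [dif_pos (h u (Finset.mem_coe.mp hu)), dif_pos (h v (Finset.mem_coe.mp hv))] at huv
      obtain ⟨t, ht⟩ := (h u (Finset.mem_coe.mp hu)).choose_spec.2
      obtain ⟨s, hs⟩ := (h v (Finset.mem_coe.mp hv)).choose_spec.2
      have hyu : (h u (Finset.mem_coe.mp hu)).choose ≠ x := by
        intro e
        exact hx (e ▸ (h u (Finset.mem_coe.mp hu)).choose_spec.1)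
      have heq : t • u = s • v := by
        have : x + t • u = x + s • v := by rw [← ht, huv, hs]
        exact add_left_cancel this
      have ht0 : t ≠ 0 := by
        rintro rfl
        simp only [zero_smul, add_zero] at ht
        exact hyu ht
      refine hpar u (Finset.mem_coe.mp hu) v (Finset.mem_coe.mp hv) hne ⟨t⁻¹ * s, ?_⟩
      rw [mul_smul, ← heq, smul_smul, inv_mul_cancel₀ ht0, one_smul]
  omega

lemma subset_of_xray {d k : ℕ} {U : Finset (EuclideanSpace ℝ (Fin d))}
    (hcard : U.card = k + 1)
    (hpar : ∀ u ∈ U, ∀ v ∈ U, u ≠ v → ¬∃ c : ℝ, u = c • v)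
    (A B : Finset (EuclideanSpace ℝ (Fin d))) (hB : B.card ≤ k)
    (hx : ∀ u ∈ U, ∀ z : EuclideanSpace ℝ (Fin d),
        (A.filter fun x => ∃ t : ℝ, x = z + t • u).card =
        (B.filter fun x => ∃ t : ℝ, x = z + t • u).card) :
    A ⊆ B := by
  intro a ha
  by_contra hna
  apply key_aux hcard hpar hB hna
  intro u hu
  have hmem : a ∈ A.filter fun x => ∃ t : ℝ, x = a + t • u :=
    Finset.mem_filter.mpr ⟨ha, 0, by simp⟩
  have hpos : 0 < (B.filter fun x => ∃ t : ℝ, x = a + t • u).card := by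
    rw [← hx u hu a]
    exact Finset.card_pos.mpr ⟨a, hmem⟩
  obtain ⟨y, hy⟩ := Finset.card_pos.mp hpos
  obtain ⟨hyB, t, hyt⟩ := Finset.mem_filter.mp hy
  exact ⟨y, hyB, t, hyt⟩

/-- Finite subsets of `Λ` of cardinality at most `k` are determined by X-rays in
any `k+1` pairwise non-parallel directions; moreover the grid of such a set is
the set itself. -/
theorem determined_by_k_plus_one_xrays (d : ℕ) (hd : 2 ≤ d)
    (Λ : Set (EuclideanSpace ℝ (Fin d))) (k : ℕ)
    (U : Finset (EuclideanSpace ℝ (Fin d))) (hcard : U.card = k + 1)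
    (hU : ∀ u ∈ U, ‖u‖ = 1)
    (hpar : ∀ u ∈ U, ∀ v ∈ U, u ≠ v → ¬∃ c : ℝ, u = c • v) :
    (∀ F F' : Finset (EuclideanSpace ℝ (Fin d)), ↑F ⊆ Λ → ↑F' ⊆ Λ →
      F.card ≤ k → F'.card ≤ k →
      (∀ u ∈ U, ∀ z : EuclideanSpace ℝ (Fin d),
        (F.filter fun x => ∃ t : ℝ, x = z + t • u).card =
        (F'.filter fun x => ∃ t : ℝ, x = z + t • u).card) →
      F = F') ∧
    (∀ F : Finset (EuclideanSpace ℝ (Fin d)), ↑F ⊆ Λ → F.card ≤ k →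
      grid d U F = ↑F) := by
  constructor
  · intro F F' _ _ hk hk' hxray
    refine Finset.Subset.antisymm (subset_of_xray hcard hpar F F' hk' hxray)
      (subset_of_xray hcard hpar F' F hk ?_)
    intro u hu z
    exact (hxray u hu z).symm
  · intro F _ hk
    ext x
    simp only [grid, Set.mem_iInter, Set.mem_iUnion, Set.mem_setOf_eq, Finset.mem_coe]
    constructor
    · intro hx
      by_contra hnx
      apply key_aux hcard hpar hk hnx
      intro u hu
      obtain ⟨z, hz, t, ht⟩ := hx u hu
      refine ⟨z, hz, -t, ?_⟩
      rw [ht]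
      simp [neg_smul]
    · intro hx u _
      exact ⟨x, hx, 0, by simp⟩
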